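/- Let g₁, g₂ be independent standard Gaussian random variables, p ≥ 2 and r ≥ 1. Then there are absolute constants c, C > 0 such that c·r^{p/2}·σ_p^p ≤ (E | |g₁|^p − |g₂|^p |^r)^{1/r} ≤ C·r^{p/2}·σ_p^p, where σ_p^p = E|g₁|^p. -/

import Mathlib

open MeasureTheory ProbabilityTheory Real Set
open scoped ENNReal NNReal

namespace Stmt5Aux

noncomputable def pdfn (x : ℝ) : ℝ := (Real.sqrt (2 * π))⁻¹ * rexp (-x ^ 2 / 2)

lemma pdfn_nonneg (x : ℝ) : 0 ≤ pdfn x := by unfold pdfn; positivity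

lemma pdfn_eq : gaussianPDFReal 0 1 = pdfn := by
  ext x
  simp [gaussianPDFReal, pdfn]

lemma continuous_pdfn : Continuous pdfn := by
  unfold pdfn; fun_prop

noncomputable def G (q : ℝ) : ℝ := (q / rexp 1) ^ (q / 2)

lemma G_pos {q : ℝ} (hq : 0 < q) : 0 < G q :=
  Real.rpow_pos_of_pos (by positivity) _

lemma core_upper {q x : ℝ} (hq : 0 < q) (hx : 0 ≤ x) :
    x ^ q * rexp (-x ^ 2 / 2) ≤ G q * rexp (-(x - Real.sqrt q) ^ 2 / 2) := by
  rcases eq_or_lt_of_le hx with h0 | hx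
  · rw [← h0, Real.zero_rpow (ne_of_gt hq), zero_mul]
    have := G_pos hq
    positivity
  · have hsq : 0 < Real.sqrt q := Real.sqrt_pos.mpr hq
    have hsq2 : Real.sqrt q ^ 2 = q := Real.sq_sqrt hq.le
    have hlog : Real.log (x / Real.sqrt q) ≤ x / Real.sqrt q - 1 :=
      Real.log_le_sub_one_of_pos (by positivity)
    rw [Real.log_div (ne_of_gt hx) (ne_of_gt hsq), Real.log_sqrt hq.le] at hlog
    have key : q * (x / Real.sqrt q) = Real.sqrt q * x := by
      field_simp
      nlinarith [hsq2]
    rw [Real.rpow_def_of_pos hx, G, Real.rpow_def_of_pos (by positivity), ← Real.exp_add,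
      ← Real.exp_add]
    apply Real.exp_le_exp.mpr
    rw [Real.log_div (ne_of_gt hq) (Real.exp_ne_zero 1), Real.log_exp]
    have hmul := mul_le_mul_of_nonneg_left hlog hq.le
    have expand : (x - Real.sqrt q) ^ 2 = x ^ 2 - 2 * (Real.sqrt q * x) + q := by
      rw [sub_sq, hsq2]; ring
    nlinarith [hmul, key, expand]

lemma core_upper_abs {q : ℝ} (hq : 0 < q) (x : ℝ) :
    |x| ^ q * rexp (-x ^ 2 / 2) ≤
      G q * (rexp (-(x - Real.sqrt q) ^ 2 / 2) + rexp (-(x + Real.sqrt q) ^ 2 / 2)) := by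
  have hG := G_pos hq
  rcases le_total 0 x with hx | hx
  · rw [abs_of_nonneg hx]
    have h := core_upper hq hx
    nlinarith [Real.exp_pos (-(x + Real.sqrt q) ^ 2 / 2)]
  · rw [abs_of_nonpos hx]
    have h := core_upper hq (neg_nonneg.mpr hx)
    have e1 : (-x : ℝ) ^ 2 = x ^ 2 := by ring
    have e2 : (-x - Real.sqrt q) ^ 2 = (x + Real.sqrt q) ^ 2 := by ring
    rw [e1, e2] at h
    nlinarith [Real.exp_pos (-(x - Real.sqrt q) ^ 2 / 2)]

lemma core_lower {q x : ℝ} (hq : 2 ≤ q) (hx1 : Real.sqrt q ≤ x)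
    (hx2 : x ≤ Real.sqrt q + 4 / 5) :
    G q * rexp (-1) ≤ x ^ q * rexp (-x ^ 2 / 2) := by
  have hq0 : 0 < q := by linarith
  have ha1 : (1 : ℝ) ≤ Real.sqrt q := by
    rw [show (1 : ℝ) = Real.sqrt 1 by simp]
    exact Real.sqrt_le_sqrt (by linarith)
  have hx0 : 0 < x := lt_of_lt_of_le (by linarith) hx1
  have hsq2 : Real.sqrt q ^ 2 = q := Real.sq_sqrt hq0.le
  set a := Real.sqrt q with ha
  have hlog : 1 - (x / a)⁻¹ ≤ Real.log (x / a) :=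
    Real.one_sub_inv_le_log_of_pos (by positivity)
  rw [inv_div] at hlog
  have h1 : (1 : ℝ) - a / x = (x - a) / x := by field_simp
  rw [h1, Real.log_div (ne_of_gt hx0) (by positivity), Real.log_sqrt hq0.le] at hlog
  have hlog2 := mul_le_mul_of_nonneg_left hlog hq0.le
  have key : a * (x - a) - (x - a) ^ 2 ≤ q * ((x - a) / x) := by
    rw [mul_div_assoc']
    rw [le_div_iff₀ hx0]
    nlinarith [hsq2, hx1, hx2, ha1]
  have hs2 : (x - a) ^ 2 ≤ 16 / 25 := by nlinarith
  rw [Real.rpow_def_of_pos hx0, G, Real.rpow_def_of_pos (by positivity), ← Real.exp_add,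
    ← Real.exp_add]
  apply Real.exp_le_exp.mpr
  rw [Real.log_div (ne_of_gt hq0) (Real.exp_ne_zero 1), Real.log_exp]
  nlinarith [hlog2, key, hs2, hsq2]

lemma measurable_pdfn : Measurable pdfn := continuous_pdfn.measurable

lemma integrable_pdfn : Integrable pdfn := by
  rw [← pdfn_eq]; exact integrable_gaussianPDFReal 0 1

lemma gaussianReal_eq :
    gaussianReal 0 1 = volume.withDensity (fun x => ENNReal.ofReal (pdfn x)) := by
  rw [gaussianReal_of_var_ne_zero 0 one_ne_zero]
  congr 1
  ext x
  rw [gaussianPDF, pdfn_eq]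

lemma integral_gauss (f : ℝ → ℝ) :
    ∫ x, f x ∂(gaussianReal 0 1) = ∫ x, pdfn x * f x := by
  rw [gaussianReal_eq]
  have h1 : (fun x => ENNReal.ofReal (pdfn x)) = (fun x => ((pdfn x).toNNReal : ℝ≥0∞)) := rfl
  rw [h1, integral_withDensity_eq_integral_smul measurable_pdfn.real_toNNReal]
  refine integral_congr_ae (Filter.Eventually.of_forall fun x => ?_)
  simp [NNReal.smul_def, Real.coe_toNNReal _ (pdfn_nonneg x)]

lemma integrable_gauss_iff (f : ℝ → ℝ) :
    Integrable f (gaussianReal 0 1) ↔ Integrable (fun x => pdfn x * f x) volume := by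
  rw [gaussianReal_eq,
    integrable_withDensity_iff_integrable_smul' measurable_pdfn.ennreal_ofReal
      (Filter.Eventually.of_forall fun x => ENNReal.ofReal_lt_top)]
  refine integrable_congr (Filter.Eventually.of_forall fun x => ?_)
  simp [ENNReal.toReal_ofReal (pdfn_nonneg x)]

lemma integrable_base : Integrable (fun x : ℝ => rexp (-x ^ 2 / 2)) := by
  have h := integrable_exp_neg_mul_sq (by norm_num : (0 : ℝ) < 1/2)
  have : (fun x : ℝ => rexp (-x ^ 2 / 2)) = fun x => rexp (-(1/2) * x ^ 2) := by
    funext x; congr 1; ring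
  rw [this]; exact h

lemma integrable_shift (c : ℝ) : Integrable (fun x : ℝ => rexp (-(x - c) ^ 2 / 2)) :=
  integrable_base.comp_sub_right c

lemma integral_shift (c : ℝ) : ∫ x : ℝ, rexp (-(x - c) ^ 2 / 2) = Real.sqrt (2 * π) := by
  rw [integral_sub_right_eq_self (fun y => rexp (-y ^ 2 / 2)) c]
  have : (fun x : ℝ => rexp (-x ^ 2 / 2)) = fun x => rexp (-(1/2) * x ^ 2) := by
    funext x; congr 1; ring
  rw [this, integral_gaussian]
  congr 1
  ring


noncomputable def Iq (q : ℝ) : ℝ := ∫ x, |x| ^ q ∂(gaussianReal 0 1)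

lemma Iq_nonneg (q : ℝ) : 0 ≤ Iq q :=
  integral_nonneg fun x => Real.rpow_nonneg (abs_nonneg _) _

noncomputable def bnd (q : ℝ) : ℝ → ℝ := fun x =>
  (Real.sqrt (2 * π))⁻¹ *
    (G q * (rexp (-(x - Real.sqrt q) ^ 2 / 2) + rexp (-(x + Real.sqrt q) ^ 2 / 2)))

lemma integrable_bnd (q : ℝ) : Integrable (bnd q) := by
  unfold bnd
  refine Integrable.const_mul (Integrable.const_mul ?_ _) _
  have h2 : Integrable (fun x : ℝ => rexp (-(x + Real.sqrt q) ^ 2 / 2)) := by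
    have := integrable_shift (-Real.sqrt q)
    simpa [sub_neg_eq_add] using this
  exact (integrable_shift (Real.sqrt q)).add h2

lemma moment_density_nonneg (q : ℝ) (x : ℝ) : 0 ≤ pdfn x * |x| ^ q :=
  mul_nonneg (pdfn_nonneg x) (Real.rpow_nonneg (abs_nonneg _) _)

lemma ptw_bnd {q : ℝ} (hq : 0 < q) (x : ℝ) : pdfn x * |x| ^ q ≤ bnd q x := by
  have h := core_upper_abs hq x
  have h2 : pdfn x * |x| ^ q = (Real.sqrt (2 * π))⁻¹ * (|x| ^ q * rexp (-x ^ 2 / 2)) := by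
    unfold pdfn; ring
  rw [h2]
  unfold bnd
  have : (0:ℝ) ≤ (Real.sqrt (2 * π))⁻¹ := by positivity
  exact mul_le_mul_of_nonneg_left h this

lemma integral_bnd {q : ℝ} (hq : 0 < q) : ∫ x, bnd q x = 2 * G q := by
  unfold bnd
  rw [integral_const_mul, integral_const_mul]
  have h2 : Integrable (fun x : ℝ => rexp (-(x + Real.sqrt q) ^ 2 / 2)) := by
    have := integrable_shift (-Real.sqrt q)
    simpa [sub_neg_eq_add] using this
  rw [integral_add (integrable_shift (Real.sqrt q)) h2, integral_shift]
  have h3 : ∫ x : ℝ, rexp (-(x + Real.sqrt q) ^ 2 / 2) = Real.sqrt (2 * π) := by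
    have := integral_shift (-Real.sqrt q)
    simpa [sub_neg_eq_add] using this
  rw [h3]
  have hs : (0:ℝ) < Real.sqrt (2 * π) := Real.sqrt_pos.mpr (by positivity)
  field_simp
  ring

lemma integrable_moment_density {q : ℝ} (hq : 0 < q) :
    Integrable (fun x => pdfn x * |x| ^ q) := by
  refine (integrable_bnd q).mono' ?_ ?_
  · exact (continuous_pdfn.mul ((Real.continuous_rpow_const hq.le).comp
      continuous_abs)).aestronglyMeasurable
  · refine Filter.Eventually.of_forall fun x => ?_
    rw [Real.norm_eq_abs, abs_of_nonneg (moment_density_nonneg q x)]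
    exact ptw_bnd hq x

lemma integrable_moment {q : ℝ} (hq : 0 < q) :
    Integrable (fun x => |x| ^ q) (gaussianReal 0 1) :=
  (integrable_gauss_iff _).mpr (integrable_moment_density hq)

lemma sqrt_two_pi_le_three : Real.sqrt (2 * π) ≤ 3 := by
  rw [show (3:ℝ) = Real.sqrt 9 by
    rw [show (9:ℝ) = 3 ^ 2 by norm_num, Real.sqrt_sq (by norm_num)]]
  exact Real.sqrt_le_sqrt (by nlinarith [Real.pi_lt_d2])

lemma moment_upper {q : ℝ} (hq : 0 < q) : Iq q ≤ 2 * G q := by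
  unfold Iq
  rw [integral_gauss]
  calc ∫ x, pdfn x * |x| ^ q ≤ ∫ x, bnd q x :=
        integral_mono_of_nonneg
          (Filter.Eventually.of_forall fun x => moment_density_nonneg q x)
          (integrable_bnd q)
          (Filter.Eventually.of_forall fun x => ptw_bnd hq x)
    _ = 2 * G q := integral_bnd hq

lemma moment_lower {q : ℝ} (hq : 2 ≤ q) : G q ≤ 12 * Iq q := by
  have hq0 : 0 < q := by linarith
  have hG := G_pos hq0
  have hs0 : 0 ≤ Real.sqrt q := Real.sqrt_nonneg q
  have hint := integrable_moment_density hq0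
  have h1 : ∫ x in Icc (Real.sqrt q) (Real.sqrt q + 4/5), pdfn x * |x| ^ q
      ≤ ∫ x, pdfn x * |x| ^ q :=
    setIntegral_le_integral hint
      (Filter.Eventually.of_forall fun x => moment_density_nonneg q x)
  have h2 : ∫ x in Icc (Real.sqrt q) (Real.sqrt q + 4/5),
      ((Real.sqrt (2 * π))⁻¹ * (G q * rexp (-1)))
      ≤ ∫ x in Icc (Real.sqrt q) (Real.sqrt q + 4/5), pdfn x * |x| ^ q := by
    refine setIntegral_mono_on ((integrableOn_const_iff enorm_ne_top).mpr (Or.inr ?_)) hint.integrableOn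
      measurableSet_Icc ?_
    · rw [Real.volume_Icc]; exact ENNReal.ofReal_lt_top
    · intro x hx
      obtain ⟨hxa, hxb⟩ := hx
      have hxpos : 0 < x := lt_of_lt_of_le (Real.sqrt_pos.mpr hq0) hxa
      rw [abs_of_nonneg hxpos.le]
      have hcore := core_lower hq hxa hxb
      have h3 : pdfn x * x ^ q = (Real.sqrt (2 * π))⁻¹ * (x ^ q * rexp (-x ^ 2 / 2)) := by
        unfold pdfn; ring
      rw [h3]
      exact mul_le_mul_of_nonneg_left hcore (by positivity)
  have h4 : ∫ x in Icc (Real.sqrt q) (Real.sqrt q + 4/5),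
      ((Real.sqrt (2 * π))⁻¹ * (G q * rexp (-1)))
      = (4/5) * ((Real.sqrt (2 * π))⁻¹ * (G q * rexp (-1))) := by
    rw [setIntegral_const, Real.volume_real_Icc, smul_eq_mul]
    norm_num
  have hsp : (0:ℝ) < Real.sqrt (2 * π) := Real.sqrt_pos.mpr (by positivity)
  have hinv : (1:ℝ)/3 ≤ (Real.sqrt (2 * π))⁻¹ := by
    rw [le_inv_comm₀ (by norm_num) hsp]
    calc Real.sqrt (2*π) ≤ 3 := sqrt_two_pi_le_three
      _ = ((1:ℝ)/3)⁻¹ := by norm_num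
  have hexp : (1:ℝ)/3 ≤ rexp (-1) := by
    rw [Real.exp_neg]
    have he : rexp 1 ≤ 3 := by nlinarith [Real.exp_one_lt_d9]
    have hep : (0:ℝ) < rexp 1 := Real.exp_pos 1
    rw [le_inv_comm₀ (by norm_num) hep]
    linarith
  have hIq : Iq q = ∫ x, pdfn x * |x| ^ q := by unfold Iq; rw [integral_gauss]
  rw [hIq]
  nlinarith [h1, h2, h4, hG,
    mul_le_mul hinv (mul_le_mul_of_nonneg_left hexp hG.le) (by positivity) (by positivity)]

lemma G_pow {p r : ℝ} (hp : 0 < p) (hr : 0 < r) :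
    (G (p * r)) ^ ((1:ℝ)/r) = r ^ (p/2) * G p := by
  unfold G
  rw [← Real.rpow_mul (by positivity : (0:ℝ) ≤ p * r / rexp 1),
    show p * r / 2 * (1/r) = p / 2 by field_simp,
    show p * r / rexp 1 = r * (p / rexp 1) by ring,
    Real.mul_rpow hr.le (by positivity)]

lemma ptw_sum {p r : ℝ} (hp : 0 ≤ p) (hr : 0 ≤ r) (z : ℝ × ℝ) :
    |(|z.1| ^ p - |z.2| ^ p)| ^ r ≤ |z.1| ^ (p * r) + |z.2| ^ (p * r) := by
  have hA : 0 ≤ |z.1| ^ p := Real.rpow_nonneg (abs_nonneg _) _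
  have hB : 0 ≤ |z.2| ^ p := Real.rpow_nonneg (abs_nonneg _) _
  have h1 : |(|z.1| ^ p - |z.2| ^ p)| ≤ max (|z.1| ^ p) (|z.2| ^ p) := by
    rw [abs_sub_le_iff]
    constructor
    · calc |z.1| ^ p - |z.2| ^ p ≤ |z.1| ^ p := by linarith
        _ ≤ _ := le_max_left _ _
    · calc |z.2| ^ p - |z.1| ^ p ≤ |z.2| ^ p := by linarith
        _ ≤ _ := le_max_right _ _
  have h2 : |(|z.1| ^ p - |z.2| ^ p)| ^ r ≤ (max (|z.1| ^ p) (|z.2| ^ p)) ^ r :=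
    Real.rpow_le_rpow (abs_nonneg _) h1 hr
  have h3 : (max (|z.1| ^ p) (|z.2| ^ p)) ^ r ≤ (|z.1| ^ p) ^ r + (|z.2| ^ p) ^ r := by
    rcases le_total (|z.1| ^ p) (|z.2| ^ p) with h | h
    · rw [max_eq_right h]; exact le_add_of_nonneg_left (Real.rpow_nonneg hA _)
    · rw [max_eq_left h]; exact le_add_of_nonneg_right (Real.rpow_nonneg hB _)
  have e1 : (|z.1| ^ p) ^ r = |z.1| ^ (p * r) := (Real.rpow_mul (abs_nonneg _) p r).symm
  have e2 : (|z.2| ^ p) ^ r = |z.2| ^ (p * r) := (Real.rpow_mul (abs_nonneg _) p r).symm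
  rw [e1, e2] at h3
  linarith

noncomputable def phi (p r : ℝ) : ℝ → ℝ := fun x => max (|x| ^ p - 1) 0 ^ r

lemma phi_nonneg (p r : ℝ) (x : ℝ) : 0 ≤ phi p r x :=
  Real.rpow_nonneg (le_max_right _ _) _

lemma phi_continuous {p r : ℝ} (hp : 0 ≤ p) (hr : 0 ≤ r) : Continuous (phi p r) :=
  (Real.continuous_rpow_const hr).comp
    ((((Real.continuous_rpow_const hp).comp continuous_abs).sub continuous_const).max
      continuous_const)

lemma phi_le {p r : ℝ} (hr : 0 ≤ r) (x : ℝ) : phi p r x ≤ |x| ^ (p * r) := by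
  have hA : 0 ≤ |x| ^ p := Real.rpow_nonneg (abs_nonneg _) _
  have h1 : max (|x| ^ p - 1) 0 ≤ |x| ^ p := max_le (by linarith) hA
  have := Real.rpow_le_rpow (le_max_right _ _) h1 hr
  calc phi p r x ≤ (|x| ^ p) ^ r := this
    _ = |x| ^ (p * r) := (Real.rpow_mul (abs_nonneg _) p r).symm

lemma phi_integrable {p r : ℝ} (hp : 0 < p) (hr : 0 < r) :
    Integrable (phi p r) (gaussianReal 0 1) := by
  have hpr : 0 < p * r := by positivity
  refine (integrable_moment hpr).mono' ((phi_continuous hp.le hr.le).aestronglyMeasurable) ?_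
  refine Filter.Eventually.of_forall fun x => ?_
  rw [Real.norm_eq_abs, abs_of_nonneg (phi_nonneg p r x)]
  exact phi_le hr.le x

lemma phi_lower1 {p r : ℝ} (hp : 0 < p) (hr : 0 < r) :
    Iq (p * r) / 2 ^ r - 1 ≤ ∫ x, phi p r x ∂(gaussianReal 0 1) := by
  have hpr : 0 < p * r := by positivity
  have hIpr := integrable_moment hpr
  have hptw : ∀ x : ℝ, |x| ^ (p * r) / 2 ^ r - 1 ≤ phi p r x := by
    intro x
    have hA : 0 ≤ |x| ^ p := Real.rpow_nonneg (abs_nonneg _) _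
    have hAr : |x| ^ (p * r) = (|x| ^ p) ^ r := Real.rpow_mul (abs_nonneg _) p r
    have hdiv : (|x| ^ p) ^ r / 2 ^ r = (|x| ^ p / 2) ^ r := by
      rw [Real.div_rpow hA (by norm_num : (0:ℝ) ≤ 2)]
    rcases le_total 2 (|x| ^ p) with h | h
    · have hmax : max (|x| ^ p - 1) 0 = |x| ^ p - 1 := max_eq_left (by linarith)
      have h5 : (|x| ^ p / 2) ^ r ≤ (|x| ^ p - 1) ^ r :=
        Real.rpow_le_rpow (by positivity) (by linarith) hr.le
      rw [hAr, hdiv]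
      unfold phi
      rw [hmax]
      linarith
    · have h5 : (|x| ^ p / 2) ^ r ≤ 1 :=
        Real.rpow_le_one (by positivity) (by linarith) hr.le
      rw [hAr, hdiv]
      have := phi_nonneg p r x
      linarith
  have hint1 : Integrable (fun x => |x| ^ (p * r) / 2 ^ r - 1) (gaussianReal 0 1) :=
    (hIpr.div_const _).sub (integrable_const 1)
  have h := integral_mono hint1 (phi_integrable hp hr) hptw
  rw [integral_sub (hIpr.div_const _) (integrable_const 1), integral_div, integral_const] at h
  simpa [Iq] using h

noncomputable def ind1 : ℝ → ℝ := (Icc (-1:ℝ) 1).indicator (fun _ => (1:ℝ))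

noncomputable def ind2 : ℝ → ℝ := (Icc (Real.sqrt 2) 2).indicator (fun _ => (1:ℝ))

lemma ind1_nonneg (x : ℝ) : 0 ≤ ind1 x := by
  unfold ind1; by_cases h : x ∈ Icc (-1:ℝ) 1 <;> simp [h]

lemma ind1_le_one (x : ℝ) : ind1 x ≤ 1 := by
  unfold ind1; by_cases h : x ∈ Icc (-1:ℝ) 1 <;> simp [h]

lemma ind2_nonneg (x : ℝ) : 0 ≤ ind2 x := by
  unfold ind2; by_cases h : x ∈ Icc (Real.sqrt 2) 2 <;> simp [h]

lemma ind2_le_one (x : ℝ) : ind2 x ≤ 1 := by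
  unfold ind2; by_cases h : x ∈ Icc (Real.sqrt 2) 2 <;> simp [h]

lemma exp_half_le_two : rexp (1/2) ≤ 2 := by
  have hsq : rexp (1/2) * rexp (1/2) = rexp 1 := by
    rw [← Real.exp_add]; norm_num
  nlinarith [Real.exp_one_lt_d9, (Real.exp_pos (1/2)).le, sq_nonneg (rexp (1/2) - 2)]

lemma exp_two_le_eight : rexp 2 ≤ 8 := by
  have hsq : rexp 1 * rexp 1 = rexp 2 := by
    rw [← Real.exp_add]; norm_num
  nlinarith [Real.exp_one_lt_d9, (Real.exp_pos 1).le]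

/-- generic lower bound for indicator integrals -/
lemma indicator_integrable (a b : ℝ) :
    Integrable (fun x => pdfn x * ((Icc a b).indicator (fun _ => (1:ℝ)) x)) := by
  refine integrable_pdfn.mono' ?_ ?_
  · exact (measurable_pdfn.mul (measurable_const.indicator measurableSet_Icc))
      |>.aestronglyMeasurable
  · refine Filter.Eventually.of_forall fun x => ?_
    have h0 : 0 ≤ (Icc a b).indicator (fun _ => (1:ℝ)) x := by
      by_cases h : x ∈ Icc a b <;> simp [h]
    have h1 : (Icc a b).indicator (fun _ => (1:ℝ)) x ≤ 1 := by
      by_cases h : x ∈ Icc a b <;> simp [h]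
    rw [Real.norm_eq_abs, abs_of_nonneg (mul_nonneg (pdfn_nonneg x) h0)]
    calc pdfn x * (Icc a b).indicator (fun _ => (1:ℝ)) x ≤ pdfn x * 1 :=
          mul_le_mul_of_nonneg_left h1 (pdfn_nonneg x)
      _ = pdfn x := mul_one _

lemma indicator_lower {a b c : ℝ} (hab : a ≤ b) (hc : 0 ≤ c)
    (hptw : ∀ x ∈ Icc a b, c ≤ pdfn x) :
    (b - a) * c ≤ ∫ x, pdfn x * ((Icc a b).indicator (fun _ => (1:ℝ)) x) := by
  have hint := indicator_integrable a b
  have h1 : ∫ x in Icc a b, pdfn x * ((Icc a b).indicator (fun _ => (1:ℝ)) x)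
      ≤ ∫ x, pdfn x * ((Icc a b).indicator (fun _ => (1:ℝ)) x) := by
    refine setIntegral_le_integral hint (Filter.Eventually.of_forall fun x => ?_)
    have h0 : 0 ≤ (Icc a b).indicator (fun _ => (1:ℝ)) x := by
      by_cases h : x ∈ Icc a b <;> simp [h]
    exact mul_nonneg (pdfn_nonneg x) h0
  have h2 : ∫ x in Icc a b, c
      ≤ ∫ x in Icc a b, pdfn x * ((Icc a b).indicator (fun _ => (1:ℝ)) x) := by
    refine setIntegral_mono_on ((integrableOn_const_iff enorm_ne_top).mpr (Or.inr ?_)) hint.integrableOn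
      measurableSet_Icc ?_
    · rw [Real.volume_Icc]; exact ENNReal.ofReal_lt_top
    · intro x hx
      rw [indicator_of_mem hx, mul_one]
      exact hptw x hx
  have h3 : ∫ x in Icc a b, (c : ℝ) = (b - a) * c := by
    rw [setIntegral_const, Real.volume_real_Icc_of_le hab, smul_eq_mul]
  linarith

lemma ind1_lower : (1:ℝ)/4 ≤ ∫ x, ind1 x ∂(gaussianReal 0 1) := by
  rw [integral_gauss]
  have hsp : (0:ℝ) < Real.sqrt (2 * π) := Real.sqrt_pos.mpr (by positivity)
  have hinv : (1:ℝ)/3 ≤ (Real.sqrt (2 * π))⁻¹ := by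
    rw [le_inv_comm₀ (by norm_num) hsp]
    calc Real.sqrt (2*π) ≤ 3 := sqrt_two_pi_le_three
      _ = ((1:ℝ)/3)⁻¹ := by norm_num
  have hexp : (1:ℝ)/2 ≤ rexp (-(1:ℝ)/2) := by
    have h := exp_half_le_two
    have hp := Real.exp_pos (1/2 : ℝ)
    have : rexp (-(1:ℝ)/2) * rexp (1/2) = 1 := by
      rw [← Real.exp_add]; norm_num
    nlinarith
  have h := indicator_lower (a := -1) (b := 1) (c := 1/6) (by norm_num) (by norm_num) ?_
  · unfold ind1
    linarith
  · intro x hx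
    obtain ⟨hx1, hx2⟩ := hx
    unfold pdfn
    have hx3 : x ^ 2 ≤ 1 := by nlinarith
    have he : rexp (-(1:ℝ)/2) ≤ rexp (-x ^ 2 / 2) := by
      apply Real.exp_le_exp.mpr; linarith
    nlinarith [Real.exp_pos (-x^2/2)]

lemma sqrt_two_le : Real.sqrt 2 ≤ 3/2 := by
  nlinarith [Real.sq_sqrt (by norm_num : (0:ℝ) ≤ 2), Real.sqrt_nonneg 2,
    sq_nonneg (Real.sqrt 2 - 3/2)]

lemma ind2_lower : (1:ℝ)/50 ≤ ∫ x, ind2 x ∂(gaussianReal 0 1) := by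
  rw [integral_gauss]
  have hsp : (0:ℝ) < Real.sqrt (2 * π) := Real.sqrt_pos.mpr (by positivity)
  have hinv : (1:ℝ)/3 ≤ (Real.sqrt (2 * π))⁻¹ := by
    rw [le_inv_comm₀ (by norm_num) hsp]
    calc Real.sqrt (2*π) ≤ 3 := sqrt_two_pi_le_three
      _ = ((1:ℝ)/3)⁻¹ := by norm_num
  have hexp : (1:ℝ)/8 ≤ rexp (-(2:ℝ)) := by
    have h := exp_two_le_eight
    have hp := Real.exp_pos (2 : ℝ)
    have : rexp (-(2:ℝ)) * rexp 2 = 1 := by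
      rw [← Real.exp_add]; norm_num
    nlinarith
  have hs2 : (0:ℝ) ≤ Real.sqrt 2 := Real.sqrt_nonneg 2
  have h := indicator_lower (a := Real.sqrt 2) (b := 2) (c := 1/24)
    (by linarith [sqrt_two_le]) (by norm_num) ?_
  · unfold ind2
    have hlen : (1:ℝ)/2 ≤ 2 - Real.sqrt 2 := by linarith [sqrt_two_le]
    nlinarith
  · intro x hx
    obtain ⟨hx1, hx2⟩ := hx
    unfold pdfn
    have hx3 : x ^ 2 ≤ 4 := by nlinarith
    have he : rexp (-(2:ℝ)) ≤ rexp (-x ^ 2 / 2) := by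
      apply Real.exp_le_exp.mpr; linarith
    nlinarith [Real.exp_pos (-x^2/2)]

lemma phi_lower2 {p r : ℝ} (hp : 2 ≤ p) (hr : 0 < r) :
    (1:ℝ)/50 ≤ ∫ x, phi p r x ∂(gaussianReal 0 1) := by
  have hp0 : (0:ℝ) < p := by linarith
  have hptw : ∀ x : ℝ, ind2 x ≤ phi p r x := by
    intro x
    by_cases hx : x ∈ Icc (Real.sqrt 2) 2
    · unfold ind2
      rw [indicator_of_mem hx]
      obtain ⟨hx1, hx2⟩ := hx
      have hs1 : (1:ℝ) ≤ Real.sqrt 2 := by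
        rw [show (1:ℝ) = Real.sqrt 1 by simp]
        exact Real.sqrt_le_sqrt (by norm_num)
      have hx0 : (0:ℝ) ≤ x := by linarith
      have hax : 1 ≤ |x| := by rw [abs_of_nonneg hx0]; linarith
      have e : |x| ^ (2:ℝ) ≤ |x| ^ p := Real.rpow_le_rpow_of_exponent_le hax hp
      have e2 : |x| ^ (2:ℝ) = x ^ 2 := by rw [Real.rpow_two]; exact sq_abs x
      have hxx : (2:ℝ) ≤ x ^ 2 := by
        nlinarith [Real.sq_sqrt (by norm_num : (0:ℝ) ≤ 2)]
      have hA2 : (2:ℝ) ≤ |x| ^ p := by rw [e2] at e; linarith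
      have h1 : (1:ℝ) ≤ max (|x| ^ p - 1) 0 :=
        le_trans (by linarith) (le_max_left _ _)
      exact Real.one_le_rpow h1 hr.le
    · unfold ind2
      rw [indicator_of_notMem hx]
      exact phi_nonneg p r x
  have h := integral_mono_of_nonneg
    (Filter.Eventually.of_forall ind2_nonneg)
    (phi_integrable hp0 hr)
    (Filter.Eventually.of_forall hptw)
  linarith [ind2_lower, h]

end Stmt5Aux

open Stmt5Aux

set_option maxHeartbeats 1000000 in
theorem stmt5 :
    ∃ c C : ℝ, 0 < c ∧ 0 < C ∧ ∀ p r : ℝ, 2 ≤ p → 1 ≤ r →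
      c * r ^ (p / 2) * (∫ x : ℝ, |x| ^ p ∂(gaussianReal 0 1)) ≤
        (∫ x : ℝ × ℝ, |(|x.1| ^ p - |x.2| ^ p)| ^ r
          ∂((gaussianReal 0 1).prod (gaussianReal 0 1))) ^ (1 / r) ∧
      (∫ x : ℝ × ℝ, |(|x.1| ^ p - |x.2| ^ p)| ^ r
          ∂((gaussianReal 0 1).prod (gaussianReal 0 1))) ^ (1 / r) ≤
        C * r ^ (p / 2) * (∫ x : ℝ, |x| ^ p ∂(gaussianReal 0 1)) := by
  refine ⟨1/19200, 48, by norm_num, by norm_num, fun p r hp hr => ?_⟩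
  have hp0 : (0:ℝ) < p := by linarith
  have hr0 : (0:ℝ) < r := by linarith
  have hrne : r ≠ 0 := ne_of_gt hr0
  have hpr2 : (2:ℝ) ≤ p * r := by nlinarith
  have hpr0 : (0:ℝ) < p * r := by linarith
  have h1r0 : (0:ℝ) ≤ 1/r := by positivity
  have h1r_le : 1/r ≤ 1 := by rw [div_le_one hr0]; exact hr
  have hIqp : (∫ x : ℝ, |x| ^ p ∂(gaussianReal 0 1)) = Iq p := rfl
  rw [hIqp]
  -- integrability on the product space
  have hIpr : Integrable (fun x => |x| ^ (p * r)) (gaussianReal 0 1) := integrable_moment hpr0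
  have hb1 : Integrable (fun z : ℝ × ℝ => |z.1| ^ (p * r))
      ((gaussianReal 0 1).prod (gaussianReal 0 1)) := by
    have := hIpr.mul_prod (integrable_const (1:ℝ) :
      Integrable (fun _ : ℝ => (1:ℝ)) (gaussianReal 0 1))
    simpa using this
  have hb2 : Integrable (fun z : ℝ × ℝ => |z.2| ^ (p * r))
      ((gaussianReal 0 1).prod (gaussianReal 0 1)) := by
    have := (integrable_const (1:ℝ) :
      Integrable (fun _ : ℝ => (1:ℝ)) (gaussianReal 0 1)).mul_prod hIpr
    simpa using this
  have hb : Integrable (fun z : ℝ × ℝ => |z.1| ^ (p * r) + |z.2| ^ (p * r))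
      ((gaussianReal 0 1).prod (gaussianReal 0 1)) := hb1.add hb2
  have hmain_meas : AEStronglyMeasurable
      (fun z : ℝ × ℝ => |(|z.1| ^ p - |z.2| ^ p)| ^ r)
      ((gaussianReal 0 1).prod (gaussianReal 0 1)) := by
    apply Continuous.aestronglyMeasurable
    exact (Real.continuous_rpow_const hr0.le).comp
      (continuous_abs.comp
        (((Real.continuous_rpow_const hp0.le).comp (continuous_abs.comp continuous_fst)).sub
          ((Real.continuous_rpow_const hp0.le).comp (continuous_abs.comp continuous_snd))))
  have hJint : Integrable (fun z : ℝ × ℝ => |(|z.1| ^ p - |z.2| ^ p)| ^ r)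
      ((gaussianReal 0 1).prod (gaussianReal 0 1)) := by
    refine hb.mono' hmain_meas ?_
    refine Filter.Eventually.of_forall fun z => ?_
    rw [Real.norm_eq_abs, abs_of_nonneg (Real.rpow_nonneg (abs_nonneg _) _)]
    exact ptw_sum hp0.le hr0.le z
  have hJ0 : 0 ≤ ∫ x : ℝ × ℝ, |(|x.1| ^ p - |x.2| ^ p)| ^ r
      ∂((gaussianReal 0 1).prod (gaussianReal 0 1)) :=
    integral_nonneg fun z => Real.rpow_nonneg (abs_nonneg _) _
  -- marginal values
  have hfst : ∫ z : ℝ × ℝ, |z.1| ^ (p * r) ∂((gaussianReal 0 1).prod (gaussianReal 0 1))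
      = Iq (p * r) := by
    have := integral_prod_mul (μ := gaussianReal 0 1) (ν := gaussianReal 0 1)
      (fun x => |x| ^ (p * r)) (fun _ => (1:ℝ))
    simpa [Iq] using this
  have hsnd : ∫ z : ℝ × ℝ, |z.2| ^ (p * r) ∂((gaussianReal 0 1).prod (gaussianReal 0 1))
      = Iq (p * r) := by
    have := integral_prod_mul (μ := gaussianReal 0 1) (ν := gaussianReal 0 1)
      (fun _ => (1:ℝ)) (fun x => |x| ^ (p * r))
    simpa [Iq] using this
  have hJle : (∫ x : ℝ × ℝ, |(|x.1| ^ p - |x.2| ^ p)| ^ r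
      ∂((gaussianReal 0 1).prod (gaussianReal 0 1))) ≤ 2 * Iq (p * r) := by
    have h := integral_mono_of_nonneg
      (Filter.Eventually.of_forall fun z : ℝ × ℝ => Real.rpow_nonneg (abs_nonneg _) _)
      hb
      (Filter.Eventually.of_forall (ptw_sum hp0.le hr0.le))
    rw [integral_add hb1 hb2, hfst, hsnd] at h
    linarith
  -- lower bound for J via phi and ind1
  have hΦ0 : 0 ≤ ∫ x, phi p r x ∂(gaussianReal 0 1) := integral_nonneg (phi_nonneg p r)
  have hprod_ptw : ∀ z : ℝ × ℝ, phi p r z.1 * ind1 z.2 ≤ |(|z.1| ^ p - |z.2| ^ p)| ^ r := by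
    intro z
    by_cases hz : z.2 ∈ Icc (-1:ℝ) 1
    · unfold ind1
      rw [indicator_of_mem hz, mul_one]
      have hB1 : |z.2| ^ p ≤ 1 :=
        Real.rpow_le_one (abs_nonneg _) (abs_le.mpr ⟨hz.1, hz.2⟩) hp0.le
      have hB0 : 0 ≤ |z.2| ^ p := Real.rpow_nonneg (abs_nonneg _) _
      have hmax : max (|z.1| ^ p - 1) 0 ≤ |(|z.1| ^ p - |z.2| ^ p)| := by
        refine max_le ?_ (abs_nonneg _)
        calc |z.1| ^ p - 1 ≤ |z.1| ^ p - |z.2| ^ p := by linarith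
          _ ≤ |(|z.1| ^ p - |z.2| ^ p)| := le_abs_self _
      exact Real.rpow_le_rpow (le_max_right _ _) hmax hr0.le
    · unfold ind1
      rw [indicator_of_notMem hz, mul_zero]
      exact Real.rpow_nonneg (abs_nonneg _) _
  have hJ_ge : (∫ x, phi p r x ∂(gaussianReal 0 1)) * (∫ x, ind1 x ∂(gaussianReal 0 1))
      ≤ ∫ x : ℝ × ℝ, |(|x.1| ^ p - |x.2| ^ p)| ^ r
        ∂((gaussianReal 0 1).prod (gaussianReal 0 1)) := by
    have h := integral_mono_of_nonneg
      (Filter.Eventually.of_forall fun z : ℝ × ℝ =>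
        mul_nonneg (phi_nonneg p r z.1) (ind1_nonneg z.2))
      hJint
      (Filter.Eventually.of_forall hprod_ptw)
    rwa [integral_prod_mul] at h
  have hα : (1:ℝ)/4 ≤ ∫ x, ind1 x ∂(gaussianReal 0 1) := ind1_lower
  have hJ_ge2 : (∫ x, phi p r x ∂(gaussianReal 0 1)) * (1/4)
      ≤ ∫ x : ℝ × ℝ, |(|x.1| ^ p - |x.2| ^ p)| ^ r
        ∂((gaussianReal 0 1).prod (gaussianReal 0 1)) := by
    have := mul_le_mul_of_nonneg_left hα hΦ0
    linarith
  have hΦ1 : Iq (p * r) / 2 ^ r - 1 ≤ ∫ x, phi p r x ∂(gaussianReal 0 1) :=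
    phi_lower1 hp0 hr0
  have hΦ2 : (1:ℝ)/50 ≤ ∫ x, phi p r x ∂(gaussianReal 0 1) := phi_lower2 hp hr0
  -- abstract the two big real numbers
  obtain ⟨J, hJdef⟩ : ∃ x, x = ∫ x : ℝ × ℝ, |(|x.1| ^ p - |x.2| ^ p)| ^ r
      ∂((gaussianReal 0 1).prod (gaussianReal 0 1)) := ⟨_, rfl⟩
  obtain ⟨Φ, hΦdef⟩ : ∃ x, x = ∫ x, phi p r x ∂(gaussianReal 0 1) := ⟨_, rfl⟩
  rw [← hJdef] at hJ0 hJle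
  rw [← hJdef]
  rw [← hJdef, ← hΦdef] at hJ_ge2
  rw [← hΦdef] at hΦ0 hΦ1 hΦ2
  clear hJ_ge hα hprod_ptw hJint hmain_meas hb hb1 hb2 hfst hsnd hIpr hIqp
  -- moment and G facts
  have hup_pr : Iq (p * r) ≤ 2 * G (p * r) := moment_upper hpr0
  have hup_p : Iq p ≤ 2 * G p := moment_upper hp0
  have hlow_p : G p ≤ 12 * Iq p := moment_lower hp
  have hlow_pr : G (p * r) ≤ 12 * Iq (p * r) := moment_lower hpr2
  have hGpow : (G (p * r)) ^ ((1:ℝ)/r) = r ^ (p/2) * G p := G_pow hp0 hr0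
  have hGpr_pos : 0 < G (p * r) := G_pos hpr0
  have hGp_pos : 0 < G p := G_pos hp0
  have hIqp_pos : 0 < Iq p := by nlinarith
  have hKr_pos : 0 < Iq (p * r) := by nlinarith
  have hrp2 : (0:ℝ) < r ^ (p/2) := Real.rpow_pos_of_pos hr0 _
  constructor
  · -- LOWER BOUND
    obtain ⟨L, hLdef⟩ : ∃ x, x = Iq (p * r) ^ ((1:ℝ)/r) := ⟨_, rfl⟩
    have hL_pos : 0 < L := hLdef ▸ Real.rpow_pos_of_pos hKr_pos _
    have hLr : L ^ r = Iq (p * r) := by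
      rw [hLdef, ← Real.rpow_mul hKr_pos.le, one_div, inv_mul_cancel₀ hrne, Real.rpow_one]
    -- T := r^(p/2) * Iq p ≤ 24 L
    have t2 : G (p * r) ^ ((1:ℝ)/r) ≤ (12 * Iq (p * r)) ^ ((1:ℝ)/r) :=
      Real.rpow_le_rpow hGpr_pos.le hlow_pr h1r0
    have t3 : ((12:ℝ) * Iq (p * r)) ^ ((1:ℝ)/r) = 12 ^ ((1:ℝ)/r) * L := by
      rw [hLdef]; exact Real.mul_rpow (by norm_num) hKr_pos.le
    have t4 : (12:ℝ) ^ ((1:ℝ)/r) ≤ 12 := by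
      calc (12:ℝ) ^ ((1:ℝ)/r) ≤ 12 ^ (1:ℝ) :=
            Real.rpow_le_rpow_of_exponent_le (by norm_num) h1r_le
        _ = 12 := Real.rpow_one 12
    have hT : r ^ (p/2) * Iq p ≤ 24 * L := by
      have s1 : r ^ (p/2) * Iq p ≤ r ^ (p/2) * (2 * G p) :=
        mul_le_mul_of_nonneg_left hup_p hrp2.le
      have s2 : r ^ (p/2) * (2 * G p) = 2 * (G (p * r) ^ ((1:ℝ)/r)) := by
        rw [hGpow]; ring
      have s3 : G (p * r) ^ ((1:ℝ)/r) ≤ 12 * L := by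
        rw [t3] at t2
        nlinarith
      linarith
    rcases le_total L 4 with hL4 | hL4
    · -- small case
      have hT96 : r ^ (p/2) * Iq p ≤ 96 := by linarith
      have hJ200 : (1:ℝ)/200 ≤ J := by nlinarith
      have hJr : (1/200 : ℝ) ^ ((1:ℝ)/r) ≤ J ^ ((1:ℝ)/r) :=
        Real.rpow_le_rpow (by norm_num) hJ200 h1r0
      have h200 : (1/200 : ℝ) ≤ (1/200 : ℝ) ^ ((1:ℝ)/r) := by
        calc (1/200 : ℝ) = (1/200 : ℝ) ^ (1:ℝ) := (Real.rpow_one _).symm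
          _ ≤ (1/200 : ℝ) ^ ((1:ℝ)/r) :=
            Real.rpow_le_rpow_of_exponent_ge (by norm_num) (by norm_num) h1r_le
      have hs : (1:ℝ)/19200 * r ^ (p/2) * Iq p ≤ 1/200 := by nlinarith
      calc (1:ℝ)/19200 * r ^ (p/2) * Iq p ≤ 1/200 := hs
        _ ≤ (1/200 : ℝ) ^ ((1:ℝ)/r) := h200
        _ ≤ J ^ ((1:ℝ)/r) := hJr
    · -- big case : L ≥ 4
      have h2r : (2:ℝ) ≤ 2 ^ r := by
        calc (2:ℝ) = 2 ^ (1:ℝ) := (Real.rpow_one 2).symm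
          _ ≤ 2 ^ r := Real.rpow_le_rpow_of_exponent_le (by norm_num) hr
      have hL4r : (1:ℝ) ≤ (L/4) ^ r := Real.one_le_rpow (by linarith) hr0.le
      have hL2r : (L/2) ^ r = (L/4) ^ r * 2 ^ r := by
        rw [show (L/2 : ℝ) = L/4 * 2 by ring]
        exact Real.mul_rpow (by positivity) (by norm_num)
      have hKr2 : Iq (p * r) / 2 ^ r = (L/2) ^ r := by
        rw [Real.div_rpow hL_pos.le (by norm_num), hLr]
      have hΦ3 : (L/4) ^ r ≤ Φ := by
        rw [hKr2, hL2r] at hΦ1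
        nlinarith
      have hL16 : (L/16) ^ r ≤ J := by
        have e1 : (L/16) ^ r = (L/4) ^ r * (1/4 : ℝ) ^ r := by
          rw [show (L/16 : ℝ) = L/4 * (1/4) by ring]
          exact Real.mul_rpow (by positivity) (by norm_num)
        have e2 : (1/4 : ℝ) ^ r ≤ 1/4 := by
          calc (1/4 : ℝ) ^ r ≤ (1/4 : ℝ) ^ (1:ℝ) :=
                Real.rpow_le_rpow_of_exponent_ge (by norm_num) (by norm_num) hr
            _ = 1/4 := Real.rpow_one _
        have e3 : (L/16) ^ r ≤ (L/4) ^ r * (1/4) := by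
          rw [e1]
          exact mul_le_mul_of_nonneg_left e2 (Real.rpow_nonneg (by positivity) _)
        have e4 : (L/4) ^ r * (1/4) ≤ J := by nlinarith
        linarith
      have hJr : ((L/16) ^ r) ^ ((1:ℝ)/r) ≤ J ^ ((1:ℝ)/r) :=
        Real.rpow_le_rpow (Real.rpow_nonneg (by positivity) _) hL16 h1r0
      have hLL : ((L/16 : ℝ) ^ r) ^ ((1:ℝ)/r) = L/16 := by
        rw [← Real.rpow_mul (by positivity : (0:ℝ) ≤ L/16), mul_one_div, div_self hrne,
          Real.rpow_one]
      have hfinal : (1:ℝ)/19200 * r ^ (p/2) * Iq p ≤ L/16 := by nlinarith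
      calc (1:ℝ)/19200 * r ^ (p/2) * Iq p ≤ L/16 := hfinal
        _ = ((L/16 : ℝ) ^ r) ^ ((1:ℝ)/r) := hLL.symm
        _ ≤ J ^ ((1:ℝ)/r) := hJr
  · -- UPPER BOUND
    have hJG : J ≤ 4 * G (p * r) := by linarith
    have hKu : J ^ ((1:ℝ)/r) ≤ (4:ℝ) ^ ((1:ℝ)/r) * G (p * r) ^ ((1:ℝ)/r) := by
      calc J ^ ((1:ℝ)/r) ≤ (4 * G (p * r)) ^ ((1:ℝ)/r) :=
            Real.rpow_le_rpow hJ0 hJG h1r0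
        _ = (4:ℝ) ^ ((1:ℝ)/r) * G (p * r) ^ ((1:ℝ)/r) :=
            Real.mul_rpow (by norm_num) hGpr_pos.le
    have h4r : (4:ℝ) ^ ((1:ℝ)/r) ≤ 4 := by
      calc (4:ℝ) ^ ((1:ℝ)/r) ≤ 4 ^ (1:ℝ) :=
            Real.rpow_le_rpow_of_exponent_le (by norm_num) h1r_le
        _ = 4 := Real.rpow_one 4
    have hGpr_pow_pos : 0 < G (p * r) ^ ((1:ℝ)/r) := Real.rpow_pos_of_pos hGpr_pos _
    have s1 : J ^ ((1:ℝ)/r) ≤ 4 * (r ^ (p/2) * G p) := by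
      rw [hGpow] at hKu hGpr_pow_pos
      nlinarith
    have s2 : 4 * (r ^ (p/2) * G p) ≤ 48 * r ^ (p/2) * Iq p := by nlinarith
    linarith
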